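/- If A is a Hermitian operator on a finite-dimensional Hilbert space H with A ≥ 0, and x ∈ F(A,λ)⊥ with x ≠ 0, then ⟨Ax, x⟩ > λ⟨x, x⟩ for every λ ≥ 0. -/

import Mathlib

open InnerProductSpace RCLike Filter Topology MeasureTheory Set

variable {𝕜 E : Type*} [RCLike 𝕜] [NormedAddCommGroup E] [InnerProductSpace 𝕜 E]

local notation "⟪" x ", " y "⟫" => @inner 𝕜 _ _ x y

/-- `PowRel A n x y` means `x ∈ D(Aⁿ)` and `Aⁿ x = y`. -/
inductive PowRel (A : E →ₗ.[𝕜] E) : ℕ → E → E → Prop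
  | zero (x : E) : PowRel A 0 x x
  | succ {n : ℕ} {x y : E} (h : PowRel A n x y) (hy : y ∈ A.domain) :
      PowRel A (n + 1) x (A ⟨y, hy⟩)

/-- `F(A,λ)` for an unbounded operator. -/
def Fset (A : E →ₗ.[𝕜] E) (lam : ℝ) : Set E :=
  {x | ∀ n : ℕ, ∃ y : E, PowRel A n x y ∧ ‖y‖ ≤ lam ^ n * ‖x‖}

/-- orthogonal complement of a set -/
def ocompl (𝕜' : Type*) {E' : Type*} [RCLike 𝕜'] [NormedAddCommGroup E']
    [InnerProductSpace 𝕜' E'] (S : Set E') : Set E' :=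
  {y | ∀ x ∈ S, (inner 𝕜' x y : 𝕜') = 0}

/-- Hermitian (symmetric) partially defined operator. -/
def IsHermitianPMap (A : E →ₗ.[𝕜] E) : Prop :=
  ∀ x y : A.domain, ⟪A x, (y : E)⟫ = ⟪(x : E), A y⟫

/-- Self-adjoint partially defined operator (densely defined, symmetric, maximal). -/
def IsSelfAdjointPMap (A : E →ₗ.[𝕜] E) : Prop :=
  Dense (A.domain : Set E) ∧ IsHermitianPMap A ∧
    ∀ y z : E, (∀ x : A.domain, ⟪A x, y⟫ = ⟪(x : E), z⟫) →
      ∃ hy : y ∈ A.domain, A ⟨y, hy⟩ = z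

/-- `F(T,λ)` for a bounded operator. -/
def FsetB (T : E →L[𝕜] E) (lam : ℝ) : Set E :=
  {x | ∀ n : ℕ, ‖(T ^ n) x‖ ≤ lam ^ n * ‖x‖}

/-- Spectral family (resolution of the identity). -/
def IsSpectralFamily (P : ℝ → (E →L[𝕜] E)) : Prop :=
  (∀ t, IsIdempotentElem (P t)) ∧
  (∀ t x y, ⟪P t x, y⟫ = ⟪x, P t y⟫) ∧
  (∀ s t : ℝ, s ≤ t → ∀ x, P t (P s x) = P s x) ∧
  (∀ t x, Tendsto (fun s => P s x) (𝓝[>] t) (𝓝 (P t x))) ∧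
  (∀ x, Tendsto (fun t => P t x) atBot (𝓝 (0 : E))) ∧
  (∀ x, Tendsto (fun t => P t x) atTop (𝓝 x))

open Classical in
/-- Lebesgue–Stieltjes measure of a monotone right-continuous function (junk value otherwise). -/
noncomputable def stMeasure (f : ℝ → ℝ) : Measure ℝ :=
  if h : Monotone f ∧ ∀ x, ContinuousWithinAt f (Ici x) x then
    StieltjesFunction.measure ⟨f, h.1, h.2⟩ else 0

/-- `F(A,λ)` for an everywhere defined linear operator. -/
def FsetL (T : E →ₗ[𝕜] E) (lam : ℝ) : Set E :=
  {x | ∀ n : ℕ, ‖(T ^ n) x‖ ≤ lam ^ n * ‖x‖}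

theorem stmt5 [FiniteDimensional 𝕜 E] (A : E →ₗ[𝕜] E) (hA : A.IsSymmetric)
    (hpos : ∀ y : E, 0 ≤ re ⟪A y, y⟫)
    (lam : ℝ) (hlam : 0 ≤ lam) (x : E) (hx : x ∈ ocompl 𝕜 (FsetL A lam)) (hx0 : x ≠ 0) :
    lam * re ⟪x, x⟫ < re ⟪A x, x⟫ := by
  set n := Module.finrank 𝕜 E with hn'
  have hn : Module.finrank 𝕜 E = n := rfl
  set b := hA.eigenvectorBasis hn with hb
  set μ := hA.eigenvalues hn with hμ
  set c : Fin n → 𝕜 := fun i => b.repr x i with hc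
  have hμ0 : ∀ i, 0 ≤ μ i := by
    intro i
    have := hpos (b i)
    rw [hA.apply_eigenvectorBasis hn i] at this
    simpa [← hb, ← hμ, inner_smul_left, inner_self_eq_norm_sq, b.orthonormal.1 i] using this
  have hpow : ∀ (m : ℕ) i, (A ^ m) (b i) = ((μ i : 𝕜) ^ m) • b i := by
    intro m i
    induction m with
    | zero => simp
    | succ m ih =>
      rw [pow_succ, Module.End.mul_apply, hA.apply_eigenvectorBasis hn i, LinearMap.map_smul, ih,
        smul_smul, ← pow_succ']
  have hmem : ∀ i, μ i ≤ lam → b i ∈ FsetL A lam := by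
    intro i hi m
    rw [hpow m i, norm_smul, norm_pow, RCLike.norm_ofReal, abs_of_nonneg (hμ0 i)]
    have h1 : ‖b i‖ = 1 := b.orthonormal.1 i
    rw [h1]
    gcongr
    exact hμ0 i
  have hcz : ∀ i, μ i ≤ lam → c i = 0 := by
    intro i hi
    exact (b.repr_apply_apply x i).trans (hx (b i) (hmem i hi))
  have h1 : ∀ y z : E, ⟪y, z⟫ = ∑ i, (starRingEnd 𝕜) (b.repr y i) * b.repr z i := by
    intro y z
    rw [← b.repr.inner_map_map y z, PiLp.inner_apply]
    simp [RCLike.inner_apply]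
    exact Finset.sum_congr rfl fun _ _ => mul_comm _ _
  have hxx : re ⟪x, x⟫ = ∑ i, ‖c i‖ ^ 2 := by
    rw [h1, map_sum]
    refine Finset.sum_congr rfl fun i _ => ?_
    rw [RCLike.conj_mul]
    norm_cast
  have hAxx : re ⟪A x, x⟫ = ∑ i, μ i * ‖c i‖ ^ 2 := by
    rw [h1, map_sum]
    refine Finset.sum_congr rfl fun i _ => ?_
    rw [show b.repr (A x) i = (μ i : 𝕜) * c i from hA.eigenvectorBasis_apply_self_apply hn x i,
      RingHom.map_mul, RCLike.conj_ofReal, mul_assoc, RCLike.conj_mul]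
    rw [← RCLike.ofReal_pow, ← RCLike.ofReal_mul, RCLike.ofReal_re]
  have hex : ∃ i, c i ≠ 0 := by
    by_contra h
    push_neg at h
    apply hx0
    have h0 : b.repr x = 0 := by
      ext i
      exact h i
    simpa using b.repr.injective (by simpa using h0)
  obtain ⟨i₀, hi₀⟩ := hex
  have hμi₀ : lam < μ i₀ := by
    by_contra h
    exact hi₀ (hcz i₀ (le_of_not_gt h))
  rw [hxx, hAxx, Finset.mul_sum]
  apply Finset.sum_lt_sum
  · intro i _
    rcases le_or_gt (μ i) lam with h | h
    · simp [hcz i h]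
    · have := sq_nonneg ‖c i‖
      nlinarith
  · refine ⟨i₀, Finset.mem_univ i₀, ?_⟩
    have h2 : 0 < ‖c i₀‖ := norm_pos_iff.mpr hi₀
    exact mul_lt_mul_of_pos_right hμi₀ (pow_pos h2 2)
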